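/- Let μ be an ergodic stationary measure on χ^ℕ with positive entropy h > 0, and ν any stationary measure. Then liminf_{n→∞} T_n^{(2)}/n ≥ 1 almost everywhere with respect to μ × ν. -/

import Mathlib

open MeasureTheory Filter
open scoped ENNReal

/-- Cylinder set of a `k`-string. -/
def cyl {χ : Type*} {k : ℕ} (ω : Fin k → χ) : Set (ℕ → χ) := {x | ∀ i : Fin k, x (i : ℕ) = ω i}

/-- The `k`-divergence between `μ` and `ν`. -/
noncomputable def div2 {χ : Type*} [MeasurableSpace χ] (μ ν : Measure (ℕ → χ)) (k : ℕ) : ℝ≥0∞ :=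
  ∑' ω : Fin k → χ, μ (cyl ω) * ν (cyl ω)

/-- The shortest-path function `T_n^{(2)}(x,y)`: the least `m ≥ 1` such that the cylinders
`[y_0^{n-1}]` and `σ^{-m}[x_0^{n-1}]` intersect. -/
noncomputable def T2 {χ : Type*} (n : ℕ) (x y : ℕ → χ) : ℕ :=
  sInf {m | 1 ≤ m ∧ ∃ z : ℕ → χ, (∀ i < n, z i = y i) ∧ (∀ i < n, z (m + i) = x i)}

/-- `R_n^{(2)}(i)`: pairs `(x,y)` such that the last `i` symbols of `y_0^{n-1}`
equal the first `i` symbols of `x_0^{n-1}`. -/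
def R2 {χ : Type*} (n i : ℕ) : Set ((ℕ → χ) × (ℕ → χ)) :=
  {p | ∀ j < i, p.2 (n - i + j) = p.1 j}

/-- Complete grammar: every finite string has positive measure. -/
def CompleteGrammar {χ : Type*} [MeasurableSpace χ] (ν : Measure (ℕ → χ)) : Prop :=
  ∀ (k : ℕ) (ω : Fin k → χ), 0 < ν (cyl ω)

/-- The left shift on `χ^ℕ`. -/
def shift {χ : Type*} (x : ℕ → χ) : ℕ → χ := fun n => x (n + 1)

/-- `μ` is ergodic with positive entropy `h`, expressed through the
Shannon–McMillan–Breiman theorem. -/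
def PositiveEntropySMB {χ : Type*} [MeasurableSpace χ] (μ : Measure (ℕ → χ)) (h : ℝ) : Prop :=
  0 < h ∧ ∀ᵐ x ∂μ, Filter.Tendsto
    (fun n : ℕ => -(1 / (n : ℝ)) * Real.log (μ (cyl (fun i : Fin n => x (i : ℕ)))).toReal)
    Filter.atTop (nhds h)

namespace T2Aux

variable {χ : Type*} [MeasurableSpace χ]

/-- Two points of `χ` are equivalent if no measurable set separates them. -/
def ee (a b : χ) : Prop := ∀ S : Set χ, MeasurableSet S → (a ∈ S ↔ b ∈ S)

lemma ee_refl (a : χ) : ee a a := fun _ _ => Iff.rfl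
lemma ee_symm {a b : χ} (h : ee a b) : ee b a := fun S hS => (h S hS).symm
lemma ee_trans {a b c : χ} (h1 : ee a b) (h2 : ee b c) : ee a c :=
  fun S hS => (h1 S hS).trans (h2 S hS)

def eeSetoid (χ : Type*) [MeasurableSpace χ] : Setoid χ :=
  ⟨ee, ⟨ee_refl, ee_symm, ee_trans⟩⟩

noncomputable def rep (a : χ) : χ := (Quotient.mk (eeSetoid χ) a).out

lemma ee_rep (a : χ) : ee (rep a) a := @Quotient.mk_out _ (eeSetoid χ) a

lemma rep_eq_of_ee {a b : χ} (h : ee a b) : rep a = rep b := by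
  unfold rep
  congr 1
  exact Quotient.sound h

lemma rep_rep (a : χ) : rep (rep a) = rep a := rep_eq_of_ee (ee_rep a)

lemma measurableSet_ee [Countable χ] (a : χ) : MeasurableSet {b | ee a b} := by
  classical
  have hsep : ∀ b : χ, ¬ ee a b → ∃ S : Set χ, MeasurableSet S ∧ a ∈ S ∧ b ∉ S := by
    intro b hb
    simp only [ee, not_forall] at hb
    obtain ⟨S, hS, hiff⟩ := hb
    by_cases ha : a ∈ S
    · exact ⟨S, hS, ha, fun hbS => hiff ⟨fun _ => hbS, fun _ => ha⟩⟩
    · by_cases hbS : b ∈ S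
      · exact ⟨Sᶜ, hS.compl, ha, fun hb' => hb' hbS⟩
      · exact absurd ⟨fun h' => absurd h' ha, fun h' => absurd h' hbS⟩ hiff
  choose T hT using hsep
  let U : χ → Set χ := fun b => if h : ee a b then Set.univ else T b h
  have hEq : {b | ee a b} = ⋂ b, U b := by
    ext c
    constructor
    · intro hc
      refine Set.mem_iInter.mpr fun b => ?_
      by_cases h : ee a b
      · simp [U, h]
      · simpa [U, h] using (hc _ (hT b h).1).mp (hT b h).2.1
    · intro hc
      by_contra hcc
      simp only [Set.mem_setOf_eq] at hcc
      have := Set.mem_iInter.mp hc c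
      simp only [U, dif_neg hcc] at this
      exact (hT c hcc).2.2 this
  rw [hEq]
  exact MeasurableSet.iInter fun b => by
    by_cases h : ee a b
    · simp [U, h]
    · simpa [U, h] using (hT b h).1

/-- Measurable sets in the product space are invariant under coordinatewise `ee`. -/
lemma mem_of_ee_pi {M : Set (ℕ → χ)} (hM : MeasurableSet M) {x y : ℕ → χ}
    (hxy : ∀ i, ee (x i) (y i)) (hx : x ∈ M) : y ∈ M := by
  let inv : Set (ℕ → χ) → Prop := fun M =>
    ∀ x ∈ M, ∀ y : ℕ → χ, (∀ i, ee (x i) (y i)) → y ∈ M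
  let m' : MeasurableSpace (ℕ → χ) :=
    { MeasurableSet' := inv
      measurableSet_empty := fun x hx _ _ => absurd hx (Set.notMem_empty x)
      measurableSet_compl := by
        intro s hs x hx y hxy hyS
        exact hx (hs y hyS x fun i => ee_symm (hxy i))
      measurableSet_iUnion := by
        intro f hf x hx y hxy
        obtain ⟨i, hi⟩ := Set.mem_iUnion.mp hx
        exact Set.mem_iUnion.mpr ⟨i, hf i x hi y hxy⟩ }
  have hle : (MeasurableSpace.pi : MeasurableSpace (ℕ → χ)) ≤ m' := by
    refine iSup_le fun i => ?_
    intro s hs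
    obtain ⟨S, hS, rfl⟩ := hs
    intro x hx y hxy
    exact (hxy i S hS).mp hx
  exact hle M hM x hx y hxy

/-- The measurable "atom cylinder". -/
def acyl {k : ℕ} (ω : Fin k → χ) : Set (ℕ → χ) := {x | ∀ i : Fin k, ee (ω i) (x (i : ℕ))}

lemma measurableSet_acyl [Countable χ] {k : ℕ} (ω : Fin k → χ) : MeasurableSet (acyl ω) := by
  have : acyl ω = ⋂ i : Fin k, (fun x : ℕ → χ => x (i : ℕ)) ⁻¹' {b | ee (ω i) b} := by
    ext z; simp [acyl, Set.mem_iInter]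
  rw [this]
  exact MeasurableSet.iInter fun i => (measurable_pi_apply _) (measurableSet_ee _)

/-- The outer measure of a cylinder equals that of its atom cylinder hull. -/
lemma measure_cyl_eq (μ : Measure (ℕ → χ)) {k : ℕ} (ω : Fin k → χ) :
    μ (cyl ω) = μ (acyl ω) := by
  classical
  apply le_antisymm
  · refine measure_mono fun z hz i => ?_
    have := hz i
    rw [this]
    exact ee_refl _
  · rw [measure_eq_iInf (cyl ω)]
    refine le_iInf fun t => le_iInf fun hsub => le_iInf fun hmeas => measure_mono ?_
    intro x hx
    set x' : ℕ → χ := fun j => if hj : j < k then ω ⟨j, hj⟩ else x j with hx'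
    have hx'cyl : x' ∈ cyl ω := by
      intro i
      simp only [hx', dif_pos i.isLt]
    have hxy : ∀ j, ee (x' j) (x j) := by
      intro j
      by_cases hj : j < k
      · simp only [hx', dif_pos hj]
        exact hx ⟨j, hj⟩
      · simp only [hx', dif_neg hj]
        exact ee_refl _
    exact mem_of_ee_pi hmeas hxy (hsub hx'cyl)

lemma shift_iterate (m : ℕ) (y : ℕ → χ) (n : ℕ) : (shift (χ := χ))^[m] y n = y (n + m) := by
  induction m generalizing y with
  | zero => rfl
  | succ m ih =>
    rw [Function.iterate_succ_apply, ih]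
    simp [shift, Nat.add_assoc]

/-- Core estimate: the probability that `x ∈ E` and `y` contains the `k`-prefix of `x`
at position `m` is at most `a`, when all atom-cylinders of points of `E` have measure `≤ a`. -/
lemma measure_overlap_le [Countable χ] (μ ν : Measure (ℕ → χ))
    [IsProbabilityMeasure μ] [IsProbabilityMeasure ν]
    (hν : MeasurePreserving (shift (χ := χ)) ν ν)
    (E : Set (ℕ → χ)) (a : ℝ≥0∞) (m k : ℕ)
    (hE : ∀ x ∈ E, μ (acyl (fun i : Fin k => x (i : ℕ))) ≤ a) :
    μ.prod ν {p : (ℕ → χ) × (ℕ → χ) | p.1 ∈ E ∧ ∀ i < k, p.2 (m + i) = p.1 i} ≤ a := by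
  classical
  set I := {ω : Fin k → χ // (∀ i, rep (ω i) = ω i) ∧ (acyl ω ∩ E).Nonempty} with hI
  have hcov : {p : (ℕ → χ) × (ℕ → χ) | p.1 ∈ E ∧ ∀ i < k, p.2 (m + i) = p.1 i} ⊆
      ⋃ ω : I, (acyl ω.1) ×ˢ ((shift (χ := χ))^[m] ⁻¹' acyl ω.1) := by
    rintro ⟨x, y⟩ ⟨hxE, hov⟩
    have hx : x ∈ acyl (fun i : Fin k => rep (x (i : ℕ))) := fun i => ee_rep _
    refine Set.mem_iUnion.mpr
      ⟨⟨fun i : Fin k => rep (x (i : ℕ)), fun i => rep_rep _, ⟨x, hx, hxE⟩⟩, hx, ?_⟩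
    intro i
    show ee _ ((shift (χ := χ))^[m] y (i : ℕ))
    have hov' : y (m + (i : ℕ)) = x (i : ℕ) := hov _ i.isLt
    rw [shift_iterate, Nat.add_comm, hov']
    exact ee_rep _
  have hdisj : Pairwise (Function.onFun Disjoint fun ω : I => acyl ω.1) := by
    intro ω ω' hne
    rw [Function.onFun, Set.disjoint_left]
    intro z hz hz'
    refine hne (Subtype.ext (funext fun i => ?_))
    rw [← ω.2.1 i, ← ω'.2.1 i]
    exact rep_eq_of_ee (ee_trans (hz i) (ee_symm (hz' i)))
  have hle : ∀ ω : I, μ (acyl ω.1) ≤ a := by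
    rintro ⟨ω, hrep, x, hxa, hxE⟩
    have : acyl ω = acyl (fun i : Fin k => x (i : ℕ)) := by
      ext z
      exact forall_congr' fun i =>
        ⟨fun hz => ee_trans (ee_symm (hxa i)) hz, fun hz => ee_trans (hxa i) hz⟩
    rw [this]
    exact hE x hxE
  calc μ.prod ν {p : (ℕ → χ) × (ℕ → χ) | p.1 ∈ E ∧ ∀ i < k, p.2 (m + i) = p.1 i}
      ≤ μ.prod ν (⋃ ω : I, (acyl ω.1) ×ˢ ((shift (χ := χ))^[m] ⁻¹' acyl ω.1)) :=
        measure_mono hcov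
    _ ≤ ∑' ω : I, μ.prod ν ((acyl ω.1) ×ˢ ((shift (χ := χ))^[m] ⁻¹' acyl ω.1)) :=
        measure_iUnion_le _
    _ = ∑' ω : I, μ (acyl ω.1) * ν (acyl ω.1) := by
        refine tsum_congr fun ω => ?_
        rw [Measure.prod_prod,
          (hν.iterate m).measure_preimage (measurableSet_acyl _).nullMeasurableSet]
    _ ≤ ∑' ω : I, a * ν (acyl ω.1) :=
        ENNReal.tsum_le_tsum fun ω => mul_le_mul_left (hle ω) _
    _ = a * ∑' ω : I, ν (acyl ω.1) := ENNReal.tsum_mul_left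
    _ = a * ν (⋃ ω : I, acyl ω.1) := by
        rw [measure_iUnion hdisj fun ω => measurableSet_acyl _]
    _ ≤ a * 1 := mul_le_mul_right prob_le_one _
    _ = a := mul_one a

end T2Aux

namespace T2Aux

lemma T2_spec {χ : Type*} (n : ℕ) (x y : ℕ → χ) :
    (1 ≤ T2 n x y ∧ ∃ z : ℕ → χ, (∀ i < n, z i = y i) ∧ (∀ i < n, z (T2 n x y + i) = x i))
    ∧ T2 n x y ≤ max 1 n := by
  classical
  have hmem : (max 1 n) ∈
      {m | 1 ≤ m ∧ ∃ z : ℕ → χ, (∀ i < n, z i = y i) ∧ (∀ i < n, z (m + i) = x i)} := by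
    refine ⟨le_max_left _ _, fun i => if h : i < n then y i else x (i - max 1 n),
      fun i hi => dif_pos hi, fun i hi => ?_⟩
    have hge : ¬ (max 1 n + i < n) := by omega
    simp only [dif_neg hge]
    congr 1
    omega
  exact ⟨Nat.sInf_mem ⟨_, hmem⟩, Nat.sInf_le hmem⟩

end T2Aux

open T2Aux

theorem T2_liminf_ge_one {χ : Type*} [MeasurableSpace χ] [Countable χ] [Nonempty χ]
    (μ ν : Measure (ℕ → χ)) [IsProbabilityMeasure μ] [IsProbabilityMeasure ν]
    (hμshift : MeasurePreserving (shift (χ := χ)) μ μ)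
    (hνshift : MeasurePreserving (shift (χ := χ)) ν ν)
    (hμerg : Ergodic (shift (χ := χ)) μ)
    (h : ℝ) (hent : PositiveEntropySMB μ h) :
    ∀ᵐ p ∂(μ.prod ν),
      1 ≤ liminf (fun n : ℕ => (T2 n p.1 p.2 : ℝ) / n) atTop := by
  classical
  obtain ⟨hpos, hsmb⟩ := hent
  set a : ℕ → ℝ≥0∞ := fun k => ENNReal.ofReal (Real.exp (-(h / 2) * k)) with ha
  set E : ℕ → Set (ℕ → χ) := fun N =>
    {x | ∀ k, N ≤ k → μ (acyl (fun i : Fin k => x (i : ℕ))) ≤ a k} with hEdef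
  -- Step 1 : a.e. x lies in some E N
  have step1 : ∀ᵐ x ∂μ, ∃ N, x ∈ E N := by
    filter_upwards [hsmb] with x hx
    have h2 : 0 < h / 2 := by linarith
    obtain ⟨N, hN⟩ := Metric.tendsto_atTop.mp hx (h / 2) h2
    refine ⟨max N 1, fun k hk => ?_⟩
    have hk1 : 1 ≤ k := le_trans (le_max_right _ _) hk
    have hkN : N ≤ k := le_trans (le_max_left _ _) hk
    have hd := hN k hkN
    rw [← measure_cyl_eq]
    set t := (μ (cyl (fun i : Fin k => x (i : ℕ)))).toReal with ht
    have hne : μ (cyl (fun i : Fin k => x (i : ℕ))) ≠ ⊤ := measure_ne_top μ _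
    have hgt : h / 2 < -(1 / (k : ℝ)) * Real.log t := by
      have := abs_lt.mp (by rwa [Real.dist_eq] at hd)
      linarith [this.1]
    by_cases h0 : μ (cyl (fun i : Fin k => x (i : ℕ))) = 0
    · rw [h0]; exact zero_le
    · have ht0 : 0 < t := ENNReal.toReal_pos h0 hne
      have hkpos : (0 : ℝ) < k := by exact_mod_cast hk1
      have hgt' : h / 2 < (- Real.log t) / k := by
        have : -(1 / (k : ℝ)) * Real.log t = (- Real.log t) / k := by ring
        linarith [this ▸ hgt]
      rw [lt_div_iff₀ hkpos] at hgt'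
      have hlog : Real.log t < -(h / 2) * k := by linarith
      have htlt : t < Real.exp (-(h / 2) * k) := by
        rw [← Real.exp_log ht0]
        exact Real.exp_lt_exp.mpr hlog
      calc μ (cyl (fun i : Fin k => x (i : ℕ))) = ENNReal.ofReal t :=
            (ENNReal.ofReal_toReal hne).symm
        _ ≤ a k := ENNReal.ofReal_le_ofReal htlt.le
  have step1' : ∀ᵐ p ∂(μ.prod ν), ∃ N, p.1 ∈ E N := by
    rw [ae_iff] at step1 ⊢
    refine measure_mono_null (fun p hp =>
      (Set.mem_prod.mpr ⟨subset_toMeasurable μ _ hp, Set.mem_univ p.2⟩ :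
        p ∈ (toMeasurable μ {x | ¬ ∃ N, x ∈ E N}) ×ˢ Set.univ)) ?_
    rw [Measure.prod_prod, measure_toMeasurable, step1, zero_mul]
  -- the bad sets
  set S : ℚ → ℕ → ℕ → Set ((ℕ → χ) × (ℕ → χ)) := fun q N n =>
    {p | p.1 ∈ E N ∧ ∃ m : ℕ, 1 ≤ m ∧ m ≤ n ∧ (q : ℝ) * n < ((n - m : ℕ) : ℝ) ∧
      ∀ i < n - m, p.2 (m + i) = p.1 i} with hSdef
  have step2 : ∀ (q : ℚ) (N : ℕ), 0 < q → q < 1 →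
      (μ.prod ν) (limsup (S q N) atTop) = 0 := by
    intro q N hq0 hq1
    obtain ⟨n₀, hn₀⟩ := exists_nat_ge ((N : ℝ) / q)
    have hq0' : (0 : ℝ) < q := by exact_mod_cast hq0
    have hbound : ∀ n, n₀ ≤ n → (μ.prod ν) (S q N n) ≤
        (n : ℝ≥0∞) * ENNReal.ofReal (Real.exp (-(h / 2) * ((q : ℝ) * n))) := by
      intro n hn
      have hcov : S q N n ⊆ ⋃ m ∈ Finset.Icc 1 n,
          (if (q : ℝ) * n < ((n - m : ℕ) : ℝ) then
            {p : (ℕ → χ) × (ℕ → χ) | p.1 ∈ E N ∧ ∀ i < n - m, p.2 (m + i) = p.1 i}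
          else (∅ : Set ((ℕ → χ) × (ℕ → χ)))) := by
        rintro p ⟨hpE, m, hm1, hmn, hqm, hov⟩
        refine Set.mem_biUnion (Finset.mem_Icc.mpr ⟨hm1, hmn⟩) ?_
        rw [if_pos hqm]
        exact ⟨hpE, hov⟩
      refine (measure_mono hcov).trans ((measure_biUnion_finset_le _ _).trans ?_)
      have hterm : ∀ m ∈ Finset.Icc 1 n, (μ.prod ν)
          (if (q : ℝ) * n < ((n - m : ℕ) : ℝ) then
            {p : (ℕ → χ) × (ℕ → χ) | p.1 ∈ E N ∧ ∀ i < n - m, p.2 (m + i) = p.1 i}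
          else (∅ : Set ((ℕ → χ) × (ℕ → χ))))
          ≤ ENNReal.ofReal (Real.exp (-(h / 2) * ((q : ℝ) * n))) := by
        intro m _
        split_ifs with hcond
        · have hkN : N ≤ n - m := by
            have h1 : (N : ℝ) ≤ (q : ℝ) * n := by
              rw [div_le_iff₀ hq0'] at hn₀
              calc (N : ℝ) ≤ n₀ * q := hn₀
                _ ≤ n * q := by
                    have : (n₀ : ℝ) ≤ n := by exact_mod_cast hn
                    nlinarith
                _ = q * n := mul_comm _ _
            have h2 : (N : ℝ) < ((n - m : ℕ) : ℝ) := lt_of_le_of_lt h1 hcond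
            exact_mod_cast h2.le
          refine (measure_overlap_le μ ν hνshift (E N) (a (n - m)) m (n - m)
            (fun x hx => hx (n - m) hkN)).trans ?_
          apply ENNReal.ofReal_le_ofReal
          apply Real.exp_le_exp.mpr
          nlinarith [hcond, hpos]
        · simp
      calc ∑ m ∈ Finset.Icc 1 n, (μ.prod ν) _
          ≤ ∑ m ∈ Finset.Icc 1 n, ENNReal.ofReal (Real.exp (-(h / 2) * ((q : ℝ) * n))) :=
            Finset.sum_le_sum hterm
        _ = (n : ℝ≥0∞) * ENNReal.ofReal (Real.exp (-(h / 2) * ((q : ℝ) * n))) := by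
            rw [Finset.sum_const, Nat.card_Icc, nsmul_eq_mul]
            norm_num
    -- summability
    set r := Real.exp (-(h / 2) * q) with hr
    have hr0 : 0 < r := Real.exp_pos _
    have hr1 : r < 1 := by
      rw [hr, Real.exp_lt_one_iff]
      nlinarith
    have hsummable : Summable (fun n : ℕ => (n : ℝ) * r ^ n) := by
      have := summable_pow_mul_geometric_of_norm_lt_one (R := ℝ) 1
        (r := r) (by rw [Real.norm_eq_abs, abs_of_pos hr0]; exact hr1)
      simpa using this
    have hexpr : ∀ n : ℕ, Real.exp (-(h / 2) * ((q : ℝ) * n)) = r ^ n := by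
      intro n
      rw [show -(h / 2) * ((q : ℝ) * n) = (n : ℝ) * (-(h / 2) * (q : ℝ)) by ring,
        Real.exp_nat_mul]
    have htsum : ∑' n, (μ.prod ν) (S q N n) ≠ ⊤ := by
      have hle : ∀ n : ℕ, (μ.prod ν) (S q N n) ≤
          (if n < n₀ then 1 else 0) + ENNReal.ofReal ((n : ℝ) * r ^ n) := by
        intro n
        by_cases hn : n < n₀
        · rw [if_pos hn]
          exact le_add_right prob_le_one
        · rw [if_neg hn]
          refine le_add_of_nonneg_of_le zero_le ?_
          refine (hbound n (not_lt.mp hn)).trans ?_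
          rw [hexpr n, ENNReal.ofReal_mul (by positivity), ENNReal.ofReal_natCast]
      refine ne_top_of_le_ne_top ?_ (ENNReal.tsum_le_tsum hle)
      rw [ENNReal.tsum_add]
      refine ENNReal.add_ne_top.mpr ⟨?_, ?_⟩
      · refine ne_top_of_le_ne_top (ENNReal.natCast_ne_top n₀) ?_
        calc ∑' n : ℕ, (if n < n₀ then (1 : ℝ≥0∞) else 0)
            = ∑ n ∈ Finset.range n₀, (if n < n₀ then (1 : ℝ≥0∞) else 0) :=
              tsum_eq_sum fun n hn => if_neg (by simpa using hn)
          _ ≤ ∑ n ∈ Finset.range n₀, 1 := Finset.sum_le_sum fun n _ => by split_ifs <;> simp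
          _ = (n₀ : ℝ≥0∞) := by simp
      · rw [← ENNReal.ofReal_tsum_of_nonneg (fun n => by positivity) hsummable]
        exact ENNReal.ofReal_ne_top
    exact measure_limsup_atTop_eq_zero htsum
  have step2' : ∀ᵐ p ∂(μ.prod ν), ∀ (q : ℚ) (N : ℕ), 0 < q → q < 1 →
      p ∉ limsup (S q N) atTop := by
    rw [ae_all_iff]
    intro q
    rw [ae_all_iff]
    intro N
    by_cases hq : 0 < q ∧ q < 1
    · filter_upwards [measure_eq_zero_iff_ae_notMem.mp (step2 q N hq.1 hq.2)] with p hp _ _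
      exact hp
    · filter_upwards with p h1 h2
      exact absurd ⟨h1, h2⟩ hq
  -- conclusion
  filter_upwards [step1', step2'] with p hpN hpS
  obtain ⟨N, hN⟩ := hpN
  set u : ℕ → ℝ := fun n => (T2 n p.1 p.2 : ℝ) / n with hu
  have hub : ∀ᶠ n in atTop, u n ≤ 1 := by
    filter_upwards [eventually_ge_atTop 1] with n hn
    have hmax := (T2_spec n p.1 p.2).2
    have hn0 : (0 : ℝ) < n := by exact_mod_cast hn
    rw [hu]
    simp only []
    rw [div_le_one hn0]
    have : T2 n p.1 p.2 ≤ n := le_trans hmax (by omega)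
    exact_mod_cast this
  have hcobdd : IsCoboundedUnder (· ≥ ·) atTop u :=
    IsBoundedUnder.isCoboundedUnder_ge ⟨1, hub⟩
  have hkey : ∀ q : ℚ, 0 < q → q < 1 → (1 : ℝ) - q ≤ liminf u atTop := by
    intro q hq0 hq1
    refine le_liminf_of_le hcobdd ?_
    by_contra hev
    have hfreq : ∃ᶠ n in atTop, u n < 1 - (q : ℝ) :=
      (Filter.not_eventually.mp hev).mono fun n hn => not_le.mp hn
    have hq0' : (0 : ℝ) < q := by exact_mod_cast hq0
    have hq1' : (q : ℝ) < 1 := by exact_mod_cast hq1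
    have hmem : ∃ᶠ n in atTop, p ∈ S q N n := by
      refine (hfreq.and_eventually (eventually_ge_atTop 1)).mono ?_
      rintro n ⟨hlt, hn1⟩
      have hn0 : (0 : ℝ) < n := by exact_mod_cast hn1
      have hT : ((T2 n p.1 p.2 : ℕ) : ℝ) < (1 - q) * n := by
        rw [hu] at hlt
        simp only [] at hlt
        rw [div_lt_iff₀ hn0] at hlt
        exact hlt
      obtain ⟨⟨hm1, z, hz1, hz2⟩, _⟩ := T2_spec n p.1 p.2
      set m := T2 n p.1 p.2 with hm
      have hmnR : (m : ℝ) < n := lt_of_lt_of_le hT (by nlinarith)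
      have hmn : m < n := by exact_mod_cast hmnR
      refine ⟨hN, m, hm1, hmn.le, ?_, ?_⟩
      · rw [Nat.cast_sub hmn.le]
        nlinarith
      · intro i hi
        have h1 : m + i < n := by omega
        calc p.2 (m + i) = z (m + i) := (hz1 _ h1).symm
          _ = p.1 i := hz2 i (by omega)
    exact hpS q N hq0 hq1 (mem_limsup_iff_frequently_mem.mpr hmem)
  refine le_of_forall_lt fun c hc => ?_
  have hmax0 : max c 0 < 1 := by
    rcases le_or_gt c 0 with h' | h'
    · simpa [max_eq_right h'] using one_pos
    · rw [max_eq_left h'.le]; exact hc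
  obtain ⟨q, hq0, hq1⟩ := exists_rat_btwn (sub_pos.mpr hmax0)
  have hq0' : 0 < q := by exact_mod_cast hq0
  have hq1' : q < 1 := by
    have : (q : ℝ) < 1 := lt_of_lt_of_le hq1 (by linarith [le_max_right c 0])
    exact_mod_cast this
  have hkeyq := hkey q hq0' hq1'
  have hc' : c < 1 - (q : ℝ) := by
    have := le_max_left c 0
    linarith
  linarith
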